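/- (Bishop-type peak function theorem for closed subspaces.) Let Ω ⊂ ℝⁿ be a bounded domain, x ∈ cl(Ω), and ℰ a closed subspace of C(cl(Ω)). Suppose there exist constants 0 < α < 1, 0 < s ≤ 1, 0 < t < 1, 0 < A < 1, C > 0 such that for each neighbourhood U of x with r_x(U) := sup_{y∈U}|y−x| < 1 there exists f_U ∈ ℰ with: (1) f_U(x) = 1; (2) |f_U(y)| ≤ α for all y ∈ cl(Ω)\U; (3) |f_U(y)| ≤ C (log(1/r_x(U)))^t for all y ∈ U; (4) {y ∈ cl(Ω) : |f_U(y)| < 1 + ε^s} ⊃ cl(Ω) ∩ B(x; A r_x(U) ε) for all 0 < ε < 1. Then there exists F ∈ ℰ with F(x) = 1 and |F(y)| < 1 for all y ∈ cl(Ω)\{x}. -/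

import Mathlib

open Real Set Metric Filter Topology
private lemma supd_eq {X : Type*} [MetricSpace X] (x : X) (U : Set X) (b : ℝ) (hb : 0 ≤ b)
    (hub : ∀ z ∈ U, dist z x ≤ b) (hw : ∃ z ∈ U, dist z x = b) :
    (⨆ z ∈ U, dist z x) = b := by
  have hball : ∀ z : X, (⨆ _ : z ∈ U, dist z x) ≤ b := by
    intro z
    by_cases hz : z ∈ U
    · rw [ciSup_pos hz]; exact hub z hz
    · haveI : IsEmpty (z ∈ U) := ⟨hz⟩
      rw [Real.iSup_of_isEmpty]; exact hb
  refine le_antisymm (Real.iSup_le hball hb) ?_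
  obtain ⟨z, hz, he⟩ := hw
  refine le_ciSup_of_le ⟨b, ?_⟩ z ?_
  · rintro v ⟨z', rfl⟩; exact hball z'
  · rw [ciSup_pos hz]; exact he.ge

private lemma tail_ge (c : ℝ) (hc : 1 ≤ c) : 1 / c ≤ ∑' j : ℕ, 1 / (c + j) ^ 2 := by
  have hc0 : 0 < c := lt_of_lt_of_le one_pos hc
  have hpos : ∀ j : ℕ, (0:ℝ) < c + j := fun j => by positivity
  have hbase : Summable (fun j : ℕ => 1 / ((j:ℝ) + 1) ^ 2) := by
    have h0 : Summable (fun n : ℕ => 1 / (n:ℝ) ^ 2) := by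
      simpa using Real.summable_one_div_nat_pow.mpr (le_refl 2)
    have := (summable_nat_add_iff 1).mpr h0
    refine this.congr fun j => ?_
    push_cast; ring
  have hsum : Summable (fun j : ℕ => 1 / (c + j) ^ 2) := by
    refine Summable.of_nonneg_of_le (fun j => by positivity) (fun j => ?_) hbase
    apply one_div_le_one_div_of_le (by positivity)
    have : (1:ℝ) + j ≤ c + j := by linarith
    nlinarith [hpos j, (by positivity : (0:ℝ) < (j:ℝ)+1)]
  have key : ∀ m : ℕ, 1/c - 1/(c + m) ≤ ∑ j ∈ Finset.range m, 1/(c+j)^2 := by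
    intro m
    have e1 : ∑ j ∈ Finset.range m, (1/(c+j) - 1/(c+(j+1:ℕ))) = 1/c - 1/(c+m) := by
      have := Finset.sum_range_sub' (fun j : ℕ => 1/(c + j)) m
      simpa using this
    calc 1/c - 1/(c+m) = ∑ j ∈ Finset.range m, (1/(c+j) - 1/(c+(j+1:ℕ))) := e1.symm
    _ ≤ ∑ j ∈ Finset.range m, 1/(c+j)^2 := by
        refine Finset.sum_le_sum fun j _ => ?_
        have h1 : (0:ℝ) < c + j := hpos j
        have h2 : (c + (j+1:ℕ) : ℝ) = c + j + 1 := by push_cast; ring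
        rw [h2]
        rw [div_sub_div _ _ h1.ne' (by linarith : (c+j+1:ℝ) ≠ 0)]
        rw [div_le_div_iff₀ (by nlinarith) (by positivity)]
        ring_nf
        nlinarith [h1]
  have htend : Tendsto (fun m : ℕ => 1/c - 1/(c + m)) atTop (𝓝 (1/c)) := by
    have h1 : Tendsto (fun m : ℕ => c + (m:ℝ)) atTop atTop :=
      Filter.tendsto_atTop_add_const_left _ c tendsto_natCast_atTop_atTop
    have h2 : Tendsto (fun m : ℕ => 1/(c + (m:ℝ))) atTop (𝓝 0) := by
      simp only [one_div]; exact h1.inv_tendsto_atTop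
    simpa using tendsto_const_nhds.sub h2
  refine le_of_tendsto htend (Filter.Eventually.of_forall fun m => ?_)
  exact (key m).trans (Summable.sum_le_tsum _ (fun i _ => by positivity) hsum)

private lemma geom_bound {Q : ℝ} (h0 : 0 < Q) (h1 : Q < 1) (K : ℕ) :
    ∑ j ∈ Finset.range K, ((j:ℝ) + 2) * Q ^ j ≤ 3 / (1 - Q) ^ 2 := by
  have hn : ‖Q‖ < 1 := by rw [Real.norm_eq_abs, abs_lt]; constructor <;> linarith
  have hs1 : Summable (fun j : ℕ => (j:ℝ) * Q ^ j) := by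
    have := summable_pow_mul_geometric_of_norm_lt_one 1 hn
    simpa using this
  have hs2 : Summable (fun j : ℕ => Q ^ j) := summable_geometric_of_lt_one h0.le h1
  have hsum : Summable (fun j : ℕ => ((j:ℝ)+2) * Q^j) := by
    have := hs1.add (hs2.mul_left 2)
    refine this.congr fun j => ?_
    ring
  have hle : ∑' j : ℕ, ((j:ℝ)+2)*Q^j ≤ 3/(1-Q)^2 := by
    have e0 : (fun j : ℕ => ((j:ℝ)+2)*Q^j) = fun j : ℕ => (j:ℝ)*Q^j + 2*Q^j := by
      funext j; ring
    have e1 : ∑' j : ℕ, ((j:ℝ)+2)*Q^j = Q/(1-Q)^2 + 2 * (1-Q)⁻¹ := by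
      rw [e0, Summable.tsum_add hs1 (hs2.mul_left 2), tsum_coe_mul_geometric_of_norm_lt_one hn,
        tsum_mul_left, tsum_geometric_of_lt_one h0.le h1]
    rw [e1]
    have hq : (0:ℝ) < 1 - Q := by linarith
    have hq2 : (0:ℝ) < (1 - Q)^2 := by positivity
    have b1 : Q/(1-Q)^2 ≤ 1/(1-Q)^2 := by gcongr <;> linarith
    have b2 : 2*(1-Q)⁻¹ ≤ 2/(1-Q)^2 := by
      rw [← one_div, mul_one_div]
      apply div_le_div_of_nonneg_left (by norm_num) hq2
      nlinarith
    have b3 : 1/(1-Q)^2 + 2/(1-Q)^2 = 3/(1-Q)^2 := by ring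
    linarith
  exact (Summable.sum_le_tsum _ (fun i _ => by positivity) hsum).trans hle

private lemma near_e1 (a b c : ℝ) (ha : 0 ≤ a) (hb : 0 ≤ b) (hc : 1 ≤ c) :
    a + b + 1 + c + 2 ≤ (b+2)*(a+c+1) := by
  nlinarith [mul_nonneg hb ha, mul_nonneg hb (by linarith : (0:ℝ) ≤ c-1)]

set_option maxHeartbeats 1000000 in
theorem stmt_12 (n : ℕ) (Ω : Set (EuclideanSpace ℝ (Fin n)))
    (hopen : IsOpen Ω) (hconn : IsConnected Ω) (hbdd : Bornology.IsBounded Ω)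
    (x : closure Ω)
    (E : Submodule ℂ C(closure Ω, ℂ)) (hE : IsClosed (E : Set C(closure Ω, ℂ)))
    (α s t A C : ℝ)
    (hα : 0 < α) (hα1 : α < 1) (hs : 0 < s) (hs1 : s ≤ 1) (ht : 0 < t) (ht1 : t < 1)
    (hA : 0 < A) (hA1 : A < 1) (hC : 0 < C)
    (hyp : ∀ U : Set (closure Ω), U ∈ nhds x → (⨆ y ∈ U, dist y x) < 1 →
      ∃ f : C(closure Ω, ℂ), f ∈ E ∧
        f x = 1 ∧
        (∀ y : closure Ω, y ∉ U → ‖f y‖ ≤ α) ∧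
        (∀ y ∈ U, ‖f y‖ ≤ C * (Real.log (1 / (⨆ z ∈ U, dist z x))) ^ t) ∧
        (∀ ε : ℝ, 0 < ε → ε < 1 → ∀ y : closure Ω,
          dist y x < A * (⨆ z ∈ U, dist z x) * ε → ‖f y‖ < 1 + ε ^ s)) :
    ∃ F : C(closure Ω, ℂ), F ∈ E ∧ F x = 1 ∧
      ∀ y : closure Ω, y ≠ x → ‖F y‖ < 1 := by
  classical
  haveI : CompactSpace (closure Ω) :=
    isCompact_iff_compactSpace.mp (isCompact_of_isClosed_isBounded isClosed_closure hbdd.closure)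
  haveI : PreconnectedSpace (closure Ω) := Subtype.preconnectedSpace hconn.isPreconnected.closure
  by_cases htriv : ∀ z : closure Ω, z = x
  · exfalso
    have hsup0 : (⨆ z ∈ (univ : Set (closure Ω)), dist z x) = 0 :=
      supd_eq x univ 0 le_rfl (fun z _ => by rw [htriv z, dist_self])
        ⟨x, mem_univ x, dist_self x⟩
    obtain ⟨f, -, hfx, -, hfM, -⟩ := hyp univ univ_mem (by rw [hsup0]; norm_num)
    have h1 := hfM x (mem_univ x)
    rw [hfx, hsup0, norm_one, div_zero, Real.log_zero, Real.zero_rpow ht.ne', mul_zero] at h1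
    exact absurd h1 (by norm_num)
  push_neg at htriv
  obtain ⟨z₀, hz₀⟩ := htriv
  have hd₀ : 0 < dist z₀ x := dist_pos.mpr hz₀
  -- geometric data
  set q : ℝ := A / 4 with hqdef
  have hq0 : 0 < q := by rw [hqdef]; positivity
  have hq1 : q < 1 := by rw [hqdef]; linarith
  set r0 : ℝ := min (dist z₀ x) (1/2) with hr0def
  have hr00 : 0 < r0 := lt_min hd₀ (by norm_num)
  have hr0half : r0 ≤ 1/2 := min_le_right _ _
  have hr0d : r0 ≤ dist z₀ x := min_le_left _ _
  set r : ℕ → ℝ := fun k => r0 * q ^ k with hrdef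
  have hr0eq : r 0 = r0 := by rw [hrdef]; simp
  have hrpos : ∀ k, 0 < r k := fun k => mul_pos hr00 (pow_pos hq0 k)
  have hrle : ∀ k, r k ≤ r0 := by
    intro k
    have h1 : q ^ k ≤ 1 := pow_le_one₀ hq0.le hq1.le
    have : r0 * q ^ k ≤ r0 * 1 := mul_le_mul_of_nonneg_left h1 hr00.le
    simpa [hrdef] using this
  have hranti : ∀ j k, j ≤ k → r k ≤ r j := by
    intro j k hjk
    have h1 : q ^ k ≤ q ^ j := pow_le_pow_of_le_one hq0.le hq1.le hjk
    simpa [hrdef] using mul_le_mul_of_nonneg_left h1 hr00.le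
  have htendsto : Tendsto r atTop (𝓝 0) := by
    rw [hrdef]
    simpa using (tendsto_pow_atTop_nhds_zero_of_lt_one hq0.le hq1).const_mul r0
  have hArk : ∀ k j : ℕ, A * r k * (q^j/2) = 2 * r (k+(j+1)) := by
    intro k j
    simp only [hrdef]
    rw [hqdef, pow_add, pow_add, pow_one]
    field_simp
    ring
  have hlog : ∀ k, Real.log (1 / r k) = -Real.log r0 + (k : ℝ) * (-Real.log q) := by
    intro k
    rw [one_div, Real.log_inv, hrdef]
    simp only []
    rw [Real.log_mul hr00.ne' (pow_pos hq0 k).ne', Real.log_pow]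
    ring
  have hsup : ∀ k, (⨆ z ∈ closedBall x (r k), dist z x) = r k := by
    intro k
    apply supd_eq x _ _ (hrpos k).le
    · intro z hz; exact mem_closedBall.mp hz
    · have hmem : r k ∈ Icc (dist x x) (dist z₀ x) := by
        rw [dist_self]; exact ⟨(hrpos k).le, (hrle k).trans hr0d⟩
      obtain ⟨z, hz⟩ := intermediate_value_univ x z₀
        (continuous_id.dist continuous_const) hmem
      exact ⟨z, mem_closedBall.mpr hz.le, hz⟩
  have key : ∀ k : ℕ, ∃ f : C(closure Ω, ℂ), f ∈ E ∧ f x = 1 ∧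
      (∀ y : closure Ω, r k < dist y x → ‖f y‖ ≤ α) ∧
      (∀ y : closure Ω, dist y x ≤ r k → ‖f y‖ ≤ C * (Real.log (1 / r k)) ^ t) ∧
      (∀ ε : ℝ, 0 < ε → ε < 1 → ∀ y : closure Ω,
        dist y x < A * r k * ε → ‖f y‖ < 1 + ε ^ s) := by
    intro k
    have h1 : closedBall x (r k) ∈ nhds x := closedBall_mem_nhds x (hrpos k)
    have h2 : (⨆ y ∈ closedBall x (r k), dist y x) < 1 := by
      rw [hsup k]
      have := hrle k
      linarith [hr0half]
    obtain ⟨f, hfE, hfx, hfa, hfM, hfe⟩ := hyp _ h1 h2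
    rw [hsup k] at hfM hfe
    refine ⟨f, hfE, hfx, ?_, ?_, hfe⟩
    · intro y hy
      exact hfa y (fun hmem => absurd (mem_closedBall.mp hmem) (not_le.mpr hy))
    · intro y hy
      exact hfM y (mem_closedBall.mpr hy)
  choose f hfE hfx hfα hfM hfε using key
  -- log constants
  have hL0 : 0 < -Real.log r0 := by
    have := Real.log_neg hr00 (by linarith : r0 < 1); linarith
  have hlam : 0 < -Real.log q := by have := Real.log_neg hq0 hq1; linarith
  set lC : ℝ := C * (-Real.log r0 + -Real.log q) ^ t with hlCdef
  have hlC : 0 < lC := mul_pos hC (Real.rpow_pos_of_pos (by linarith) t)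
  set M : ℕ → ℝ := fun k => C * (Real.log (1 / r k)) ^ t with hMdef
  have hMeq : ∀ k, M k = C * (Real.log (1 / r k)) ^ t := fun k => by rw [hMdef]
  have hM1 : ∀ k, 1 ≤ M k := by
    intro k
    have h1 := hfM k x (by rw [dist_self]; exact (hrpos k).le)
    rw [hfx, norm_one] at h1
    rw [hMeq]; exact h1
  have hMpos : ∀ k, 0 < M k := fun k => lt_of_lt_of_le one_pos (hM1 k)
  have hMle : ∀ k, M k ≤ lC * ((k:ℝ)+1) ^ t := by
    intro k
    have hk0 : (0:ℝ) ≤ (k:ℝ) := Nat.cast_nonneg k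
    have h1 : Real.log (1 / r k) ≤ (-Real.log r0 + -Real.log q) * ((k:ℝ)+1) := by
      rw [hlog k]; nlinarith
    have h0 : (0:ℝ) ≤ Real.log (1 / r k) := by rw [hlog k]; nlinarith
    calc M k = C * (Real.log (1/r k))^t := hMeq k
    _ ≤ C * ((-Real.log r0 + -Real.log q) * ((k:ℝ)+1))^t :=
        mul_le_mul_of_nonneg_left (Real.rpow_le_rpow h0 h1 ht.le) hC.le
    _ = lC * ((k:ℝ)+1)^t := by
        rw [Real.mul_rpow (by linarith) (by positivity), hlCdef]; ring
  have hfMr : ∀ k (y : closure Ω), dist y x ≤ r k → ‖f k y‖ ≤ M k := by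
    intro k y hy; rw [hMeq]; exact hfM k y hy
  clear_value M
  clear hMdef hMeq hfM hlog
  have hnorm : ∀ k, ‖f k‖ ≤ M k := by
    intro k
    rw [ContinuousMap.norm_le _ (hMpos k).le]
    intro y
    by_cases hy : dist y x ≤ r k
    · exact hfMr k y hy
    · exact le_trans (hfα k y (not_le.mp hy)) (le_trans hα1.le (hM1 k))
  have habs_le : ∀ k (y : closure Ω), ‖f k y‖ ≤ M k := by
    intro k y
    exact (ContinuousMap.norm_coe_le_norm (f k) y).trans (hnorm k)
  -- Q
  set Q : ℝ := q ^ s with hQdef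
  have hQ0 : 0 < Q := Real.rpow_pos_of_pos hq0 s
  have hQ1 : Q < 1 := Real.rpow_lt_one hq0.le hq1 hs
  have hQpow : ∀ j : ℕ, ((q^j : ℝ)) ^ s = Q ^ j := by
    intro j
    rw [hQdef, ← Real.rpow_natCast q j, ← Real.rpow_mul hq0.le, mul_comm,
      Real.rpow_mul hq0.le, Real.rpow_natCast]
  clear_value Q
  clear hQdef
  -- now make q, r0, r, lC opaque
  clear_value q r0 r lC
  clear hqdef hr0def hrdef hlCdef
  have h1α : (0:ℝ) < 1 - α := by linarith
  have h1Q : (0:ℝ) < 1 - Q := by linarith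
  -- G and β
  set G : ℝ := max 1 ((6 * lC / (1 - α)) ^ ((1:ℝ) / (1 - t))) with hGdef
  have hG1 : (1:ℝ) ≤ G := le_max_left _ _
  have hGpow : (6 * lC / (1 - α)) ^ ((1:ℝ) / (1 - t)) ≤ G := le_max_right _ _
  clear_value G
  clear hGdef
  set β : ℝ := max 1 (max (6 * lC * G / (1 - α)) (9 / (2 * (1 - α) * (1 - Q) ^ 2))) with hβdef
  have hβ1 : (1:ℝ) ≤ β := le_max_left _ _
  have hβ2 : 6 * lC * G / (1 - α) ≤ β := le_trans (le_max_left _ _) (le_max_right _ _)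
  have hβ3 : 9 / (2 * (1 - α) * (1 - Q) ^ 2) ≤ β := le_trans (le_max_right _ _) (le_max_right _ _)
  clear_value β
  clear hβdef
  -- weights
  set w : ℕ → ℝ := fun k => 1 / ((k:ℝ) + β + 1) ^ 2 with hwdef
  have hwk : ∀ k : ℕ, w k = 1 / ((k:ℝ) + β + 1) ^ 2 := fun k => by rw [hwdef]
  have hden : ∀ k : ℕ, (0:ℝ) < (k:ℝ) + β + 1 := by
    intro k; have : (0:ℝ) ≤ (k:ℝ) := Nat.cast_nonneg k; linarith
  have hwpos : ∀ k, 0 < w k := by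
    intro k
    rw [hwk]
    exact one_div_pos.mpr (pow_pos (hden k) 2)
  have hwle : ∀ k, w k ≤ 1 / ((k:ℝ)+1)^2 := by
    intro k
    rw [hwk]
    apply one_div_le_one_div_of_le (by positivity)
    have hk0 : (0:ℝ) ≤ (k:ℝ) := Nat.cast_nonneg k
    nlinarith [hden k]
  clear_value w
  clear hwdef
  have hbase : Summable (fun k : ℕ => 1 / ((k:ℝ) + 1) ^ 2) := by
    have h0 : Summable (fun m : ℕ => 1 / (m:ℝ) ^ 2) := by
      simpa using Real.summable_one_div_nat_pow.mpr (le_refl 2)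
    have := (summable_nat_add_iff 1).mpr h0
    refine this.congr fun j => ?_
    push_cast; ring
  have hwsum : Summable w := Summable.of_nonneg_of_le (fun k => (hwpos k).le) hwle hbase
  have hwMsum : Summable (fun k => w k * M k) := by
    have hrsum : Summable (fun k : ℕ => lC * ((k:ℝ)+1) ^ (t-2)) := by
      have h0 : Summable (fun m : ℕ => (m:ℝ) ^ (t-2)) := summable_nat_rpow.mpr (by linarith)
      have h1 := (summable_nat_add_iff 1).mpr h0
      refine (h1.congr fun j => ?_).mul_left lC
      push_cast; ring_nf
    refine Summable.of_nonneg_of_le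
      (fun k => mul_nonneg (hwpos k).le (hMpos k).le) (fun k => ?_) hrsum
    have hk1 : (0:ℝ) < (k:ℝ) + 1 := by positivity
    have e1 : ((k:ℝ)+1) ^ (t-2) = ((k:ℝ)+1)^t / ((k:ℝ)+1)^2 := by
      rw [← Real.rpow_natCast ((k:ℝ)+1) 2, ← Real.rpow_sub hk1]
      norm_num
    have h2 : w k * M k ≤ (1/((k:ℝ)+1)^2) * (lC * ((k:ℝ)+1)^t) := by
      apply mul_le_mul (hwle k) (hMle k) (hMpos k).le (by positivity)
    calc w k * M k ≤ (1/((k:ℝ)+1)^2) * (lC * ((k:ℝ)+1)^t) := h2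
    _ = lC * (((k:ℝ)+1)^t / ((k:ℝ)+1)^2) := by ring
    _ = lC * ((k:ℝ)+1) ^ (t-2) := by rw [e1]
  -- the series
  have hfsum : Summable (fun k => ((w k : ℝ) : ℂ) • f k) := by
    apply Summable.of_norm_bounded hwMsum
    intro k
    rw [norm_smul, Complex.norm_real, Real.norm_eq_abs, abs_of_pos (hwpos k)]
    exact mul_le_mul_of_nonneg_left (hnorm k) (hwpos k).le
  set g : C(closure Ω, ℂ) := ∑' k, ((w k : ℝ) : ℂ) • f k with hgdef
  have hghas : HasSum (fun k => ((w k : ℝ) : ℂ) • f k) g := hfsum.hasSum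
  clear_value g
  clear hgdef
  have hgE : g ∈ E := by
    refine hE.mem_of_tendsto hghas.tendsto_sum_nat (Filter.Eventually.of_forall fun m => ?_)
    exact Submodule.sum_mem E (fun k _ => E.smul_mem _ (hfE k))
  have heval : ∀ y : closure Ω, HasSum (fun k => ((w k : ℝ) : ℂ) * f k y) (g y) := by
    intro y
    have hcont : Continuous (fun h : C(closure Ω, ℂ) => h y) :=
      continuous_eval_const y
    have h2 := hghas.map
      (⟨⟨fun h : C(closure Ω, ℂ) => h y, rfl⟩, fun a b => rfl⟩ : C(closure Ω, ℂ) →+ ℂ) hcont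
    exact h2
  set W : ℝ := ∑' k, w k with hWdef
  have hW : 0 < W := by
    rw [hWdef]; exact Summable.tsum_pos hwsum (fun k => (hwpos k).le) 0 (hwpos 0)
  have hgx : g x = (W : ℂ) := by
    have h1 := heval x
    simp only [hfx, mul_one] at h1
    have h2 : HasSum (fun k => ((w k : ℝ) : ℂ)) ((W:ℝ):ℂ) := by
      rw [hWdef]
      have := Complex.ofRealCLM.hasSum hwsum.hasSum
      simpa using this
    exact h1.unique h2
  refine ⟨((W:ℝ):ℂ)⁻¹ • g, E.smul_mem _ hgE, ?_, ?_⟩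
  · rw [ContinuousMap.smul_apply, hgx, smul_eq_mul,
      inv_mul_cancel₀ (by exact_mod_cast hW.ne')]
  intro y hy
  have hd : 0 < dist y x := dist_pos.mpr hy
  have hterm_norm : ∀ k, ‖((w k : ℝ) : ℂ) * f k y‖ = w k * ‖f k y‖ := by
    intro k
    rw [norm_mul, Complex.norm_real, Real.norm_eq_abs, abs_of_pos (hwpos k)]
  have hSsum : Summable (fun k => w k * ‖f k y‖) := by
    refine Summable.of_nonneg_of_le
      (fun k => mul_nonneg (hwpos k).le (norm_nonneg _))
      (fun k => mul_le_mul_of_nonneg_left (habs_le k y) (hwpos k).le) hwMsum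
  set S : ℝ := ∑' k, w k * ‖f k y‖ with hSdef
  have hgy : ‖g y‖ ≤ S := by
    rw [← (heval y).tsum_eq, hSdef]
    refine le_trans (norm_tsum_le_tsum_norm ?_) ?_
    · exact hSsum.congr (fun k => (hterm_norm k).symm)
    · exact le_of_eq (tsum_congr hterm_norm)
  clear_value S W
  have hSW : S < W := by
    by_cases hcase : r 0 < dist y x
    · have h1 : ∀ k, w k * ‖f k y‖ ≤ w k * α := fun k =>
        mul_le_mul_of_nonneg_left
          (hfα k y (lt_of_le_of_lt ((hrle k).trans_eq hr0eq.symm) hcase)) (hwpos k).le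
      have h2 : S ≤ W * α := by
        rw [hSdef, hWdef]
        calc ∑' k, w k * ‖f k y‖ ≤ ∑' k, w k * α :=
          Summable.tsum_le_tsum h1 hSsum (hwsum.mul_right α)
        _ = (∑' k, w k) * α := tsum_mul_right
      have h3 : W * α < W * 1 := mul_lt_mul_of_pos_left hα1 hW
      rw [mul_one] at h3
      linarith
    · push_neg at hcase
      have hex : ∃ k, r (k+1) < dist y x := by
        obtain ⟨k, hk⟩ := (htendsto.eventually (gt_mem_nhds hd)).exists
        exact ⟨k, lt_of_le_of_lt (hranti k (k+1) (Nat.le_succ k)) hk⟩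
      obtain ⟨K, hK1, hKmin⟩ : ∃ K, r (K+1) < dist y x ∧
          ∀ m, m < K → ¬ (r (m+1) < dist y x) :=
        ⟨Nat.find hex, Nat.find_spec hex, fun m hm => Nat.find_min hex hm⟩
      have hK2 : ∀ k, k ≤ K → dist y x ≤ r k := by
        intro k hk
        cases k with
        | zero => exact hcase
        | succ j => exact not_lt.mp (hKmin j (Nat.lt_of_succ_le hk))
      set D : ℝ := (K:ℝ) + β + 2 with hDdef
      have hD : 0 < D := by
        have : (0:ℝ) ≤ (K:ℝ) := Nat.cast_nonneg K; rw [hDdef]; linarith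
      have hDeq : D = (K:ℝ) + β + 2 := hDdef
      clear_value D
      clear hDdef
      -- tail
      set T : ℝ := ∑' j : ℕ, w (j + (K+1)) with hTdef
      have hTsum : Summable (fun j : ℕ => w (j + (K+1))) :=
        (summable_nat_add_iff (K+1)).mpr hwsum
      have hTS : Summable (fun j : ℕ => w (j+(K+1)) * ‖f (j+(K+1)) y‖) :=
        (summable_nat_add_iff (f := fun k => w k * ‖f k y‖) (K+1)).mpr hSsum
      have htail : ∑' j : ℕ, w (j+(K+1)) * ‖f (j+(K+1)) y‖ ≤ T * α := by
        rw [hTdef]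
        calc ∑' j : ℕ, w (j+(K+1)) * ‖f (j+(K+1)) y‖
            ≤ ∑' j : ℕ, w (j+(K+1)) * α := by
              refine Summable.tsum_le_tsum (fun j => ?_) hTS (hTsum.mul_right α)
              refine mul_le_mul_of_nonneg_left (hfα _ y ?_) (hwpos _).le
              exact lt_of_le_of_lt (hranti (K+1) (j+(K+1)) (Nat.le_add_left _ _)) hK1
        _ = (∑' j : ℕ, w (j+(K+1))) * α := tsum_mul_right
      have hT1 : 1 ≤ T * D := by
        have hc : (1:ℝ) ≤ D := by
          have : (0:ℝ) ≤ (K:ℝ) := Nat.cast_nonneg K; rw [hDeq]; linarith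
        have h1 := tail_ge D hc
        have h2 : T = ∑' j : ℕ, 1 / (D + j) ^ 2 := by
          rw [hTdef]
          refine tsum_congr (fun j => ?_)
          rw [hwk, hDeq]
          congr 2
          push_cast; ring
        have h3 : 1 / D ≤ T := h2 ▸ h1
        have h4 := mul_le_mul_of_nonneg_right h3 hD.le
        rwa [one_div, inv_mul_cancel₀ hD.ne'] at h4
      clear_value T
      -- near bound
      have hheadNear : ∀ k, k < K → ‖f k y‖ ≤ 1 + Q ^ (K-1-k) := by
        intro k hk
        set j := K - 1 - k with hj
        have hjk : k + (j + 1) = K := by omega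
        have hqj1 : q ^ j ≤ 1 := pow_le_one₀ hq0.le hq1.le
        have hε0 : (0:ℝ) < q^j/2 := div_pos (pow_pos hq0 j) two_pos
        have hε1 : q^j/2 < 1 := by linarith
        have hdlt : dist y x < A * r k * (q^j/2) := by
          rw [hArk k j, hjk]
          have h5 := hK2 K le_rfl
          linarith [hrpos K]
        have h := hfε k (q^j/2) hε0 hε1 y hdlt
        have hQj : (q^j/2 : ℝ) ^ s ≤ Q ^ j := by
          have e2 : (q^j/2 : ℝ) ^ s = (q^j:ℝ)^s * ((1:ℝ)/2)^s := by
            rw [show (q^j/2 : ℝ) = q^j * (1/2) by ring,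
              Real.mul_rpow (pow_nonneg hq0.le j) (by norm_num)]
          have e3 : ((1:ℝ)/2)^s ≤ 1 := Real.rpow_le_one (by norm_num) (by norm_num) hs.le
          rw [e2, hQpow j]
          calc Q^j * ((1:ℝ)/2)^s ≤ Q^j * 1 :=
            mul_le_mul_of_nonneg_left e3 (pow_nonneg hQ0.le j)
          _ = Q^j := mul_one _
        linarith
      -- mid bound
      have hP : (0:ℝ) ≤ ((K:ℝ)+1)^t := Real.rpow_nonneg (by positivity) t
      have hK0 : (0:ℝ) ≤ (K:ℝ) := Nat.cast_nonneg K
      have claim1 : 6 * lC * ((K:ℝ)+1)^t ≤ (1-α) * ((K:ℝ)+β+1) := by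
        have hbase0 : (0:ℝ) ≤ 6 * lC / (1-α) := div_nonneg (by linarith) h1α.le
        by_cases hKG : G ≤ (K:ℝ)+1
        · have h4 : (6*lC/(1-α)) ^ (((1:ℝ)/(1-t))*(1-t)) ≤ G^(1-t) := by
            rw [Real.rpow_mul hbase0]
            exact Real.rpow_le_rpow (Real.rpow_nonneg hbase0 _) hGpow (by linarith)
          rw [one_div_mul_cancel (by linarith : (1:ℝ)-t ≠ 0), Real.rpow_one] at h4
          have h3 : G ^ (1-t) ≤ ((K:ℝ)+1)^(1-t) :=
            Real.rpow_le_rpow (by linarith) hKG (by linarith)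
          have h1 : 6 * lC / (1-α) ≤ ((K:ℝ)+1)^(1-t) := h4.trans h3
          have h5 : ((K:ℝ)+1)^(1-t) * ((K:ℝ)+1)^t = (K:ℝ)+1 := by
            rw [← Real.rpow_add (by positivity)]; norm_num
          have h6 := mul_le_mul_of_nonneg_right h1 hP
          rw [h5] at h6
          rw [div_mul_eq_mul_div, div_le_iff₀ h1α] at h6
          have h7 : (1-α) * ((K:ℝ)+1) ≤ (1-α) * ((K:ℝ)+β+1) :=
            mul_le_mul_of_nonneg_left (by linarith) h1α.le
          calc 6 * lC * ((K:ℝ)+1)^t ≤ ((K:ℝ)+1) * (1-α) := h6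
          _ = (1-α) * ((K:ℝ)+1) := by ring
          _ ≤ (1-α) * ((K:ℝ)+β+1) := h7
        · push_neg at hKG
          have h1 : ((K:ℝ)+1)^t ≤ (K:ℝ)+1 := by
            have := Real.rpow_le_rpow_of_exponent_le (by linarith : (1:ℝ) ≤ (K:ℝ)+1) ht1.le
            rwa [Real.rpow_one] at this
          have h2 : 6*lC*((K:ℝ)+1)^t ≤ 6*lC*G :=
            mul_le_mul_of_nonneg_left (h1.trans hKG.le) (by linarith)
          have h3 : 6*lC*G ≤ (1-α)*β := by
            rw [div_le_iff₀ h1α] at hβ2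
            linarith [hβ2]
          have h4 : (1-α)*β ≤ (1-α)*((K:ℝ)+β+1) :=
            mul_le_mul_of_nonneg_left (by linarith) h1α.le
          linarith
      have hMid : w K * M K * D ≤ (1-α)/3 := by
        have hu : (0:ℝ) < (K:ℝ)+β+1 := hden K
        have hMD : M K * D ≤ lC * ((K:ℝ)+1)^t * (2*((K:ℝ)+β+1)) := by
          refine mul_le_mul (hMle K) ?_ hD.le (mul_nonneg hlC.le hP)
          rw [hDeq]; linarith
        have hc6 : lC * ((K:ℝ)+1)^t ≤ (1-α)*((K:ℝ)+β+1)/6 := by linarith [claim1]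
        have h3 : lC * ((K:ℝ)+1)^t * (2*((K:ℝ)+β+1))
            ≤ ((1-α)*((K:ℝ)+β+1)/6) * (2*((K:ℝ)+β+1)) :=
          mul_le_mul_of_nonneg_right hc6 (by linarith)
        have h4 : ((1-α)*((K:ℝ)+β+1)/6) * (2*((K:ℝ)+β+1)) = ((1-α)/3) * ((K:ℝ)+β+1)^2 := by
          ring
        have h5 : M K * D ≤ ((1-α)/3) * ((K:ℝ)+β+1)^2 := hMD.trans (h4 ▸ h3)
        rw [hwk]
        rw [div_mul_eq_mul_div, div_mul_eq_mul_div, div_le_iff₀ (pow_pos hu 2)]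
        calc 1 * M K * D = M K * D := by ring
        _ ≤ ((1-α)/3) * ((K:ℝ)+β+1)^2 := h5
        _ = (1-α)/3 * ((K:ℝ)+β+1)^2 := by ring
      -- near sum bound
      have hNear : (∑ k ∈ Finset.range K, w k * Q ^ (K-1-k)) * D ≤ 2*(1-α)/3 := by
        have hterm : ∀ k ∈ Finset.range K,
            w k * Q ^ (K-1-k) * D ≤ (((K-1-k:ℕ):ℝ)+2) * Q^(K-1-k) / (β+1) := by
          intro k hk
          have hkK : k < K := Finset.mem_range.mp hk
          have hjk : k + (K-1-k) + 1 = K := by omega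
          set j := K - 1 - k with hj
          have hu : (0:ℝ) < (k:ℝ)+β+1 := hden k
          have hb1 : (0:ℝ) < β + 1 := by linarith
          have hQj : (0:ℝ) ≤ Q ^ j := pow_nonneg hQ0.le j
          have hcast : ((K:ℝ)) = (k:ℝ) + (j:ℝ) + 1 := by
            rw [← hjk]; push_cast; ring
          have hdiv : D / ((k:ℝ)+β+1)^2 ≤ ((j:ℝ)+2)/(β+1) := by
            rw [div_le_div_iff₀ (pow_pos hu 2) hb1]
            rw [hDeq, hcast]
            have hj0 : (0:ℝ) ≤ (j:ℝ) := Nat.cast_nonneg j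
            have hk0 : (0:ℝ) ≤ (k:ℝ) := Nat.cast_nonneg k
            have e1 : (k:ℝ)+(j:ℝ)+1+β+2 ≤ ((j:ℝ)+2)*((k:ℝ)+β+1) :=
              near_e1 (k:ℝ) (j:ℝ) β hk0 hj0 hβ1
            have e2 : ((k:ℝ)+(j:ℝ)+1+β+2) * (β+1) ≤ (((j:ℝ)+2)*((k:ℝ)+β+1)) * (β+1) :=
              mul_le_mul_of_nonneg_right e1 (by linarith)
            have e3 : (((j:ℝ)+2)*((k:ℝ)+β+1)) * (β+1) ≤ (((j:ℝ)+2)*((k:ℝ)+β+1)) * ((k:ℝ)+β+1) :=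
              mul_le_mul_of_nonneg_left (by linarith)
                (mul_nonneg (by linarith) hu.le)
            calc ((k:ℝ)+(j:ℝ)+1+β+2) * (β+1)
                ≤ (((j:ℝ)+2)*((k:ℝ)+β+1)) * ((k:ℝ)+β+1) := le_trans e2 e3
            _ = ((j:ℝ)+2)*((k:ℝ)+β+1)^2 := by ring
          calc w k * Q ^ j * D = (D / ((k:ℝ)+β+1)^2) * Q ^ j := by rw [hwk]; ring
          _ ≤ (((j:ℝ)+2)/(β+1)) * Q ^ j := mul_le_mul_of_nonneg_right hdiv hQj
          _ = ((j:ℝ)+2) * Q^j / (β+1) := by ring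
        have h1 : (∑ k ∈ Finset.range K, w k * Q^(K-1-k)) * D
            ≤ ∑ k ∈ Finset.range K, (((K-1-k:ℕ):ℝ)+2)*Q^(K-1-k)/(β+1) := by
          rw [Finset.sum_mul]
          exact Finset.sum_le_sum hterm
        have h2 : ∑ k ∈ Finset.range K, (((K-1-k:ℕ):ℝ)+2)*Q^(K-1-k)/(β+1)
            = ∑ j ∈ Finset.range K, (((j:ℕ):ℝ)+2)*Q^j/(β+1) :=
          Finset.sum_range_reflect (fun j => (((j:ℕ):ℝ)+2)*Q^j/(β+1)) K
        have hb1 : (0:ℝ) < β + 1 := by linarith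
        have h3 : ∑ j ∈ Finset.range K, (((j:ℕ):ℝ)+2)*Q^j/(β+1) ≤ (3/(1-Q)^2)/(β+1) := by
          rw [← Finset.sum_div]
          gcongr
          exact geom_bound hQ0 hQ1 K
        have h4 : (3/(1-Q)^2)/(β+1) ≤ 2*(1-α)/3 := by
          have hQQ : (0:ℝ) < (1-Q)^2 := pow_pos h1Q 2
          have hp2 : (0:ℝ) < 2 * (1-α) * (1-Q)^2 := by positivity
          rw [div_le_iff₀ hp2] at hβ3
          have h5 : 9 ≤ (β+1) * (2*(1-α)*(1-Q)^2) := by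
            have h6 : β * (2*(1-α)*(1-Q)^2) ≤ (β+1) * (2*(1-α)*(1-Q)^2) :=
              mul_le_mul_of_nonneg_right (by linarith) hp2.le
            linarith
          rw [div_le_div_iff₀ (by linarith) (by norm_num), div_mul_eq_mul_div,
            div_le_iff₀ hQQ]
          nlinarith [h5]
        calc (∑ k ∈ Finset.range K, w k * Q^(K-1-k)) * D
            ≤ ∑ k ∈ Finset.range K, (((K-1-k:ℕ):ℝ)+2)*Q^(K-1-k)/(β+1) := h1
        _ = ∑ j ∈ Finset.range K, (((j:ℕ):ℝ)+2)*Q^j/(β+1) := h2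
        _ ≤ (3/(1-Q)^2)/(β+1) := h3
        _ ≤ 2*(1-α)/3 := h4
      -- assemble
      have hsplitS := Summable.sum_add_tsum_nat_add
        (f := fun k => w k * ‖f k y‖) (K+1) hSsum
      have hsplitW := Summable.sum_add_tsum_nat_add (f := w) (K+1) hwsum
      have hhead : ∑ k ∈ Finset.range (K+1), w k * ‖f k y‖
          ≤ ∑ k ∈ Finset.range K, w k
            + (∑ k ∈ Finset.range K, w k * Q^(K-1-k)) + w K * M K := by
        rw [Finset.sum_range_succ]
        have h1 : ∑ k ∈ Finset.range K, w k * ‖f k y‖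
            ≤ ∑ k ∈ Finset.range K, (w k + w k * Q^(K-1-k)) := by
          refine Finset.sum_le_sum fun k hk => ?_
          have h2 := hheadNear k (Finset.mem_range.mp hk)
          calc w k * ‖f k y‖ ≤ w k * (1 + Q^(K-1-k)) :=
            mul_le_mul_of_nonneg_left h2 (hwpos k).le
          _ = w k + w k * Q^(K-1-k) := by ring
        rw [Finset.sum_add_distrib] at h1
        have h3 : w K * ‖f K y‖ ≤ w K * M K :=
          mul_le_mul_of_nonneg_left (habs_le K y) (hwpos K).le
        linarith
      have hkey : (∑ k ∈ Finset.range K, w k * Q^(K-1-k)) + w K * M K ≤ (1-α) * T := by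
        have h1 : ((∑ k ∈ Finset.range K, w k * Q^(K-1-k)) + w K * M K) * D ≤ (1-α) := by
          rw [add_mul]
          linarith [hNear, hMid]
        have h2 : (1-α) ≤ (1-α) * (T * D) := by
          have := mul_le_mul_of_nonneg_left hT1 h1α.le
          simpa using this
        have h3 : ((∑ k ∈ Finset.range K, w k * Q^(K-1-k)) + w K * M K) * D
            ≤ ((1-α)*T) * D := by
          rw [mul_assoc]
          linarith [h1, h2]
        exact le_of_mul_le_mul_right h3 hD
      have hWexp : W = ∑ k ∈ Finset.range K, w k + w K + T := by
        rw [hWdef, ← hsplitW, Finset.sum_range_succ, hTdef]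
      have hSexp : S = ∑ k ∈ Finset.range (K+1), w k * ‖f k y‖
          + ∑' j : ℕ, w (j+(K+1)) * ‖f (j+(K+1)) y‖ := by
        rw [hSdef, ← hsplitS]
      have halphaT : (1-α) * T + T * α = T := by ring
      rw [hSexp, hWexp]
      linarith [hhead, htail, hkey, hwpos K]
  -- conclude
  have hFy : ‖(((W:ℝ):ℂ)⁻¹ • g) y‖ = W⁻¹ * ‖g y‖ := by
    rw [ContinuousMap.smul_apply, smul_eq_mul, norm_mul, norm_inv, Complex.norm_real,
      Real.norm_eq_abs, abs_of_pos hW]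
  rw [hFy]
  have h2 : W⁻¹ * ‖g y‖ ≤ W⁻¹ * S :=
    mul_le_mul_of_nonneg_left hgy (inv_nonneg.mpr hW.le)
  have h3 : W⁻¹ * S < W⁻¹ * W :=
    mul_lt_mul_of_pos_left hSW (inv_pos.mpr hW)
  rw [inv_mul_cancel₀ hW.ne'] at h3
  linarith
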